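/- On ℝ⁴, with elements written x = (s, ξ₁, ξ₂, t) and y = (s′, η₁, η₂, t′), define the bracket [x, y] = (ξ₁η₂ − ξ₂η₁, tη₂ − t′ξ₂, −tη₁ + t′ξ₁, 0) and the symmetric bilinear form ⟨x, y⟩ = st′ + ts′ − ξ₁η₁ − ξ₂η₂. Then: (a) the bracket is bilinear, alternating, and satisfies the Jacobi identity, so it makes ℝ⁴ a real Lie algebra; (b) the form is adjoint-invariant: ⟨[x,y], z⟩ + ⟨y, [x,z]⟩ = 0 for all x, y, z ∈ ℝ⁴; (c) the form is nondegenerate of Lorentz signature (1,3) (one positive and three negative squares), so this Lie algebra is a Minkowski space with invariant Lorentz metric. -/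
import Mathlib


noncomputable section

/-- The bracket of the Lie algebra `E₀` on ℝ⁴, written in coordinates
`x = (s, ξ₁, ξ₂, t)`. -/
def br (x y : Fin 4 → ℝ) : Fin 4 → ℝ :=
  ![x 1 * y 2 - x 2 * y 1,
    x 3 * y 2 - y 3 * x 2,
    -(x 3 * y 1) + y 3 * x 1,
    0]

/-- The Lorentz bilinear form `⟨x,y⟩ = st′ + ts′ − ξ₁η₁ − ξ₂η₂` on ℝ⁴. -/
def lform (x y : Fin 4 → ℝ) : ℝ :=
  x 0 * y 3 + x 3 * y 0 - x 1 * y 1 - x 2 * y 2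

/-- (a) `br` is bilinear, alternating, and satisfies the Jacobi identity,
so it makes ℝ⁴ a real Lie algebra; (b) `lform` is adjoint-invariant; (c) `lform` is
nondegenerate of Lorentz signature (1,3): there is a basis in which it is
`diag(1, −1, −1, −1)`. -/
theorem stmt17 :
    -- (a) bilinearity
    (∀ (a : ℝ) (x x' y : Fin 4 → ℝ), br (a • x + x') y = a • br x y + br x' y) ∧
    (∀ (a : ℝ) (x y y' : Fin 4 → ℝ), br x (a • y + y') = a • br x y + br x y') ∧
    -- alternating
    (∀ x : Fin 4 → ℝ, br x x = 0) ∧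
    -- Jacobi identity
    (∀ x y z : Fin 4 → ℝ, br x (br y z) + br y (br z x) + br z (br x y) = 0) ∧
    -- (b) adjoint invariance
    (∀ x y z : Fin 4 → ℝ, lform (br x y) z + lform y (br x z) = 0) ∧
    -- symmetry and bilinearity of the form
    (∀ x y : Fin 4 → ℝ, lform x y = lform y x) ∧
    (∀ (a : ℝ) (x x' y : Fin 4 → ℝ), lform (a • x + x') y = a * lform x y + lform x' y) ∧
    -- (c) nondegeneracy
    (∀ x : Fin 4 → ℝ, (∀ y : Fin 4 → ℝ, lform x y = 0) → x = 0) ∧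
    -- Lorentz signature (1,3)
    (∃ e : Fin 4 → (Fin 4 → ℝ), LinearIndependent ℝ e ∧
      ∀ i j, lform (e i) (e j) =
        if i = j then (if i = 0 then 1 else -1) else 0) := by
  refine ⟨?_, ?_, ?_, ?_, ?_, ?_, ?_, ?_, ?_⟩
  · intro a x x' y
    funext i
    fin_cases i <;> simp [br] <;> ring
  · intro a x y y'
    funext i
    fin_cases i <;> simp [br] <;> ring
  · intro x
    funext i
    fin_cases i <;> simp [br] <;> ring
  · intro x y z
    funext i
    fin_cases i <;> simp [br] <;> ring
  · intro x y z
    simp [br, lform]; ring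
  · intro x y
    simp [lform]; ring
  · intro a x x' y
    simp [lform]; ring
  · intro x h
    have h0 := h ![0, 0, 0, 1]
    have h1 := h ![0, 1, 0, 0]
    have h2 := h ![0, 0, 1, 0]
    have h3 := h ![1, 0, 0, 0]
    simp [lform] at h0 h1 h2 h3
    funext i
    fin_cases i <;> simp_all
  · set a : ℝ := (Real.sqrt 2)⁻¹ with ha
    have ha2 : a * a = 1 / 2 := by
      rw [ha, ← mul_inv]
      rw [Real.mul_self_sqrt (by norm_num)]
      norm_num
    refine ⟨![![a, 0, 0, a], ![0, 1, 0, 0], ![0, 0, 1, 0], ![a, 0, 0, -a]], ?_, ?_⟩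
    · have hane : a ≠ 0 := by
        rw [ha]
        positivity
      rw [Fintype.linearIndependent_iff]
      intro g hg
      have h0 := congrFun hg 0
      have h1 := congrFun hg 1
      have h2 := congrFun hg 2
      have h3 := congrFun hg 3
      simp [Fin.sum_univ_four, Matrix.vecHead, Matrix.vecTail] at h0 h1 h2 h3
      have hsum : g 0 + g 3 = 0 := by
        rcases mul_eq_zero.1 (show (g 0 + g 3) * a = 0 by linarith) with h | h
        · exact h
        · exact absurd h hane
      have hdiff : g 0 - g 3 = 0 := by
        rcases mul_eq_zero.1 (show (g 0 - g 3) * a = 0 by linarith) with h | h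
        · exact h
        · exact absurd h hane
      intro i
      fin_cases i <;> simp_all <;> linarith
    · intro i j
      fin_cases i <;> fin_cases j <;>
        simp [lform, Matrix.vecHead, Matrix.vecTail] <;> nlinarith [ha2]
  end
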